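/- For every v_N ∈ X_N satisfying b(v_N, q_N) = g(q_N) for all q_N ∈ Y_N, and for every q_N ∈ Y_N, it holds that ‖v_N - u_N‖_{X,a} ≤ ‖v_N - u‖_{X,a} + (γ_b/√α_a)·‖p - q_N‖_Y, where ‖v‖_{X,a} = √(a(v,v)) is the energy norm. -/

import Mathlib

/-- Cauchy–Schwarz for a symmetric positive semidefinite bilinear form. -/
lemma bilin_cs {X : Type*} [AddCommGroup X] [Module ℝ X]
    (a : X →ₗ[ℝ] X →ₗ[ℝ] ℝ) (hsymm : ∀ w v, a w v = a v w)
    (hpos : ∀ v, 0 ≤ a v v) (w v : X) :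
    a w v ≤ Real.sqrt (a w w) * Real.sqrt (a v v) := by
  have key : ∀ t : ℝ, 0 ≤ (a v v) * (t * t) + (2 * a w v) * t + a w w := by
    intro t
    have h := hpos (w + t • v)
    have : a (w + t • v) (w + t • v)
        = (a v v) * t ^ 2 + (2 * a w v) * t + a w w := by
      simp [map_add, map_smul, hsymm v w]
      ring
    linarith [h, this]
  have hd := discrim_le_zero key
  rw [discrim] at hd
  have hsq : (a w v) ^ 2 ≤ (a w w) * (a v v) := by
    nlinarith [hd]
  calc a w v ≤ |a w v| := le_abs_self _
    _ = Real.sqrt ((a w v) ^ 2) := (Real.sqrt_sq_eq_abs _).symm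
    _ ≤ Real.sqrt ((a w w) * (a v v)) := Real.sqrt_le_sqrt hsq
    _ = Real.sqrt (a w w) * Real.sqrt (a v v) :=
        Real.sqrt_mul (hpos w) _

theorem stmt2
  {X Y : Type*} [NormedAddCommGroup X] [InnerProductSpace ℝ X] [FiniteDimensional ℝ X]
  [NormedAddCommGroup Y] [InnerProductSpace ℝ Y] [FiniteDimensional ℝ Y]
  (a : X →ₗ[ℝ] X →ₗ[ℝ] ℝ) (b : X →ₗ[ℝ] Y →ₗ[ℝ] ℝ)
  (ha_symm : ∀ w v : X, a w v = a v w)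
  (αa γa : ℝ) (hαa : 0 < αa) (hγa : 0 < γa)
  (ha_coer : ∀ v : X, αa * ‖v‖ ^ 2 ≤ a v v)
  (ha_cont : ∀ w v : X, a w v ≤ γa * ‖w‖ * ‖v‖)
  (γb : ℝ) (hγb : 0 < γb)
  (hb_cont : ∀ (v : X) (q : Y), b v q ≤ γb * ‖v‖ * ‖q‖)
  (f : X →ₗ[ℝ] ℝ) (g : Y →ₗ[ℝ] ℝ)
  (u : X) (p : Y)
  (htruth1 : ∀ v : X, a u v + b v p = f v)
  (htruth2 : ∀ q : Y, b u q = g q)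
  (XN : Submodule ℝ X) (YN : Submodule ℝ Y)
  (uN : X) (pN : Y) (huN : uN ∈ XN) (hpN : pN ∈ YN)
  (hrb1 : ∀ v ∈ XN, a uN v + b v pN = f v)
  (hrb2 : ∀ q ∈ YN, b uN q = g q)
  (vN : X) (hvN : vN ∈ XN) (hvN_g : ∀ q ∈ YN, b vN q = g q)
  (qN : Y) (hqN : qN ∈ YN) :
    Real.sqrt (a (vN - uN) (vN - uN)) ≤ Real.sqrt (a (vN - u) (vN - u)) + (γb / Real.sqrt αa) * ‖p - qN‖ := by
  set e := vN - uN with he_def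
  have hpos : ∀ v : X, 0 ≤ a v v := fun v =>
    le_trans (by positivity) (ha_coer v)
  have heXN : e ∈ XN := XN.sub_mem hvN huN
  -- b e q = 0 for q ∈ YN
  have hbe : ∀ q ∈ YN, b e q = 0 := by
    intro q hq
    have := hvN_g q hq
    have := hrb2 q hq
    simp [he_def, map_sub]
    linarith
  -- a (u - uN) e = - b e p
  have hgal : a (u - uN) e = - b e p := by
    have h1 := htruth1 e
    have h2 := hrb1 e heXN
    have h3 := hbe pN hpN
    simp only [map_sub, LinearMap.sub_apply] at *
    have : (a u) e = (a uN) e + (b e) pN - (b e) p := by linarith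
    linarith
  -- key decomposition
  have hdecomp : a e e = a (vN - u) e + b e (qN - p) := by
    have h4 := hbe qN hqN
    have : a e e = a (vN - u) e + a (u - uN) e := by
      have : e = (vN - u) + (u - uN) := by rw [he_def]; abel
      rw [this] at *
      simp [map_add]
    rw [this, hgal, map_sub (b e) qN p]
    linarith [h4]
  set s := Real.sqrt (a e e) with hs_def
  have hs_nonneg : 0 ≤ s := Real.sqrt_nonneg _
  have hs_sq : s ^ 2 = a e e := Real.sq_sqrt (hpos e)
  -- norm bound: √αa * ‖e‖ ≤ s
  have hnorm : Real.sqrt αa * ‖e‖ ≤ s := by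
    have h := ha_coer e
    have : Real.sqrt (αa * ‖e‖ ^ 2) ≤ s := Real.sqrt_le_sqrt h
    rwa [Real.sqrt_mul hαa.le, Real.sqrt_sq (norm_nonneg _)] at this
  have hsqa : (0:ℝ) < Real.sqrt αa := Real.sqrt_pos.mpr hαa
  -- bound b e (qN - p)
  have hb_bound : b e (qN - p) ≤ γb / Real.sqrt αa * ‖p - qN‖ * s := by
    have h1 := hb_cont e (qN - p)
    have h2 : ‖qN - p‖ = ‖p - qN‖ := norm_sub_rev _ _
    have h3 : ‖e‖ ≤ s / Real.sqrt αa := by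
      rw [le_div_iff₀ hsqa]; linarith [hnorm]
    have h4 : γb * ‖e‖ * ‖qN - p‖ ≤ γb * (s / Real.sqrt αa) * ‖p - qN‖ := by
      rw [h2]
      gcongr
    calc b e (qN - p) ≤ γb * ‖e‖ * ‖qN - p‖ := h1
      _ ≤ γb * (s / Real.sqrt αa) * ‖p - qN‖ := h4
      _ = γb / Real.sqrt αa * ‖p - qN‖ * s := by ring
  -- Cauchy-Schwarz for a
  have hcs : a (vN - u) e ≤ Real.sqrt (a (vN - u) (vN - u)) * s :=
    bilin_cs a ha_symm hpos (vN - u) e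
  have hmain : s ^ 2 ≤ (Real.sqrt (a (vN - u) (vN - u)) + γb / Real.sqrt αa * ‖p - qN‖) * s := by
    rw [hs_sq, hdecomp]; nlinarith [hcs, hb_bound]
  rcases eq_or_lt_of_le hs_nonneg with h0 | h0
  · rw [← h0]
    positivity
  · have := (mul_le_mul_iff_of_pos_right h0).mp (by nlinarith [hmain] : s * s ≤ (Real.sqrt (a (vN - u) (vN - u)) + γb / Real.sqrt αa * ‖p - qN‖) * s)
    linarith
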